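/- Let X be a compact metrizable space and T : X → 2^X an open set-valued map (T(A) := ⋃_{x∈A}T(x) is open for every open A ⊆ X). Then the cardinality function x ↦ #T^{-1}(x), taking values in ℤ_{≥0} ∪ {∞}, is lower semi-continuous: if y_n → y then #T^{-1}(y) ≤ liminf_n #T^{-1}(y_n). -/

import Mathlib

open Filter Topology

lemma enat_le_of_forall {a b : ℕ∞} (h : ∀ n : ℕ, (n : ℕ∞) ≤ a → (n : ℕ∞) ≤ b) : a ≤ b := by
  induction a using ENat.recTopCoe with
  | top =>
    by_contra hb
    have hbt : b ≠ ⊤ := fun ht => hb (le_of_eq ht.symm)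
    obtain ⟨m, hm⟩ := ENat.exists_nat_gt hbt
    exact absurd (h m le_top) (not_le.mpr hm)
  | coe n => exact h n le_rfl

theorem stmt14 {X : Type*} [TopologicalSpace X] [CompactSpace X]
    [TopologicalSpace.MetrizableSpace X] (T : X → Set X)
    (hopen : ∀ A : Set X, IsOpen A → IsOpen {y : X | ∃ x ∈ A, y ∈ T x}) :
    ∀ (y : ℕ → X) (l : X), Tendsto y atTop (𝓝 l) →
      {x : X | l ∈ T x}.encard ≤ Filter.liminf (fun n => {x : X | y n ∈ T x}.encard) atTop := by
  intro y l hy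
  apply enat_le_of_forall
  intro n hn
  -- pick a finite subset of T⁻¹(l) of size n
  obtain ⟨t, hts, htn⟩ := Set.exists_subset_encard_eq hn
  have htfin : t.Finite := Set.finite_of_encard_eq_coe htn
  -- separate its points by disjoint open sets
  obtain ⟨U, hU, hdisj⟩ := htfin.t2_separation
  -- each T(U x) is an open neighborhood of l
  have hmem : ∀ x ∈ t, ∀ᶠ m in atTop, ∃ z ∈ U x, y m ∈ T z := by
    intro x hx
    have hop : IsOpen {w : X | ∃ z ∈ U x, w ∈ T z} := hopen _ (hU x).2
    have hl : l ∈ {w : X | ∃ z ∈ U x, w ∈ T z} := ⟨x, (hU x).1, hts hx⟩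
    exact hy (hop.mem_nhds hl)
  have hev : ∀ᶠ m in atTop, ∀ x ∈ t, ∃ z ∈ U x, y m ∈ T z :=
    (Filter.eventually_all_finite htfin).mpr hmem
  refine Filter.le_liminf_of_le (by isBoundedDefault) ?_
  filter_upwards [hev] with m hm
  -- choose zs : for each x ∈ t, a witness z x ∈ U x with y m ∈ T (z x)
  choose! z hz1 hz2 using hm
  have hinj : Set.InjOn z t := by
    intro a ha b hb hab
    by_contra hne
    have := hdisj ha hb hne
    exact Set.disjoint_left.mp this (hz1 a ha) (hab ▸ hz1 b hb)
  have himage : z '' t ⊆ {x : X | y m ∈ T x} := by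
    rintro _ ⟨a, ha, rfl⟩
    exact hz2 a ha
  calc (n : ℕ∞) = t.encard := htn.symm
    _ = (z '' t).encard := (Set.InjOn.encard_image hinj).symm
    _ ≤ {x : X | y m ∈ T x}.encard := Set.encard_le_encard himage
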